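/- For α > 8/3, the map F_α(x) = −(3α/2)x(x−1)(x−2) has exactly two fixed points x₋(α) < 3/2 < x₊(α) in (1,2), with x₊ stable in the sense |F'_α(x₊)| < 1 for α sufficiently close to 8/3, and the distance x₊(α) − x₋(α) scales as the square root of (α − 8/3): precisely, (x₊(α) − x₋(α))² / (α − 8/3) tends to a positive finite limit as α → (8/3)⁺. -/

import Mathlib

open Filter

/-- The cubic coupling function with `δ = 0`. -/
noncomputable def g0 (x : ℝ) : ℝ := -(3 / 2) * x * (x - 1) * (x - 2)

private lemma basic_facts {α : ℝ} (hα : 8 / 3 < α) :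
    0 < α ∧ 0 < 1/4 - 2/(3*α) ∧
    (Real.sqrt (1/4 - 2/(3*α)))^2 = 1/4 - 2/(3*α) ∧
    0 < Real.sqrt (1/4 - 2/(3*α)) ∧ Real.sqrt (1/4 - 2/(3*α)) < 1/2 := by
  have hα0 : 0 < α := by linarith
  have harg : 0 < 1/4 - 2/(3*α) := by
    have h1 : 2/(3*α) < 1/4 := by
      rw [div_lt_div_iff₀ (by linarith) (by norm_num)]
      linarith
    linarith
  have hs2 : (Real.sqrt (1/4 - 2/(3*α)))^2 = 1/4 - 2/(3*α) := Real.sq_sqrt harg.le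
  have hs0 : 0 < Real.sqrt (1/4 - 2/(3*α)) := Real.sqrt_pos.2 harg
  have hslt : Real.sqrt (1/4 - 2/(3*α)) < 1/2 := by
    nlinarith [div_pos (by norm_num : (0:ℝ) < 2) (by linarith : 0 < 3*α)]
  exact ⟨hα0, harg, hs2, hs0, hslt⟩

theorem two_fixed_points_and_sqrt_splitting :
    ∃ xm xp : ℝ → ℝ,
      -- for α > 8/3 there are exactly two fixed points x₋ < 3/2 < x₊ in (1,2)
      (∀ α : ℝ, 8 / 3 < α →
        xm α ∈ Set.Ioo (1 : ℝ) 2 ∧ xp α ∈ Set.Ioo (1 : ℝ) 2 ∧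
        xm α < 3 / 2 ∧ 3 / 2 < xp α ∧
        α * g0 (xm α) = xm α ∧ α * g0 (xp α) = xp α ∧
        (∀ x ∈ Set.Ioo (1 : ℝ) 2, α * g0 x = x → x = xm α ∨ x = xp α)) ∧
      -- x₊ is stable for α close enough to 8/3
      (∃ ε > (0 : ℝ), ∀ α : ℝ, 8 / 3 < α → α < 8 / 3 + ε →
        |deriv (fun x => α * g0 x) (xp α)| < 1) ∧
      -- square-root splitting: (x₊ − x₋)² / (α − 8/3) has a positive finite limit
      (∃ L > (0 : ℝ),
        Tendsto (fun α : ℝ => (xp α - xm α) ^ 2 / (α - 8 / 3))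
          (nhdsWithin (8 / 3) (Set.Ioi (8 / 3))) (nhds L)) := by
  refine ⟨fun α => 3/2 - Real.sqrt (1/4 - 2/(3*α)),
          fun α => 3/2 + Real.sqrt (1/4 - 2/(3*α)), ?_, ?_, ?_⟩
  · intro α hα
    obtain ⟨hα0, harg, hs2, hs0, hslt⟩ := basic_facts hα
    set s := Real.sqrt (1/4 - 2/(3*α)) with hs_def
    have hαne : α ≠ 0 := ne_of_gt hα0
    have hkey : 3*α*s^2 = 3*α/4 - 2 := by
      rw [hs2]; field_simp
    refine ⟨⟨by linarith, by linarith⟩, ⟨by linarith, by linarith⟩,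
            by linarith, by linarith, ?_, ?_, ?_⟩
    · simp only [g0]
      linear_combination (-(1/2) * (3/2 - s)) * hkey
    · simp only [g0]
      linear_combination (-(1/2) * (3/2 + s)) * hkey
    · rintro x ⟨hx1, hx2⟩ hfix
      have hxpos : (0:ℝ) < x := by linarith
      simp only [g0] at hfix
      have hfac : (3/2)*α*x*((x - 3/2)^2 - s^2) = 0 := by
        linear_combination (-1) * hfix + (-(x/2)) * hkey
      have h2 : (x - 3/2)^2 - s^2 = 0 := by
        rcases mul_eq_zero.mp hfac with h | h
        · exact absurd h (by positivity)
        · exact h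
      have hprod : (x - (3/2 - s)) * (x - (3/2 + s)) = 0 := by
        linear_combination h2
      rcases mul_eq_zero.mp hprod with h | h
      · exact Or.inl (by linarith [sub_eq_zero.mp h])
      · exact Or.inr (by linarith [sub_eq_zero.mp h])
  · refine ⟨1/100, by norm_num, fun α hα hαε => ?_⟩
    obtain ⟨hα0, harg, hs2, hs0, hslt⟩ := basic_facts hα
    set s := Real.sqrt (1/4 - 2/(3*α)) with hs_def
    have hαne : α ≠ 0 := ne_of_gt hα0
    have hkey2 : 4*α*s^2 = α - 8/3 := by
      rw [hs2]; field_simp; ring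
    -- bound s
    have hs_small : s < 1/31 := by nlinarith
    -- compute the derivative
    have hfun : (fun x : ℝ => α * g0 x)
        = fun x : ℝ => -(3*α/2)*x^3 + (9*α/2)*x^2 - 3*α*x := by
      funext x; simp only [g0]; ring
    set x0 : ℝ := 3/2 + s with hx0_def
    have h1 : HasDerivAt (fun x : ℝ => x^3) (3*x0^2) x0 := by
      simpa using hasDerivAt_pow 3 x0
    have h2 : HasDerivAt (fun x : ℝ => x^2) (2*x0) x0 := by
      simpa using hasDerivAt_pow 2 x0
    have h3 : HasDerivAt (fun x : ℝ => x) 1 x0 := hasDerivAt_id x0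
    have hd : HasDerivAt (fun x : ℝ => -(3*α/2)*x^3 + (9*α/2)*x^2 - 3*α*x)
        (-(3*α/2)*(3*x0^2) + (9*α/2)*(2*x0) - 3*α*1) x0 :=
      ((h1.const_mul (-(3*α/2))).add (h2.const_mul (9*α/2))).sub
        (h3.const_mul (3*α))
    have hderiv : deriv (fun x : ℝ => α * g0 x) (3/2 + s)
        = -(3*α/2)*(3*x0^2) + (9*α/2)*(2*x0) - 3*α*1 := by
      rw [hfun]; exact hd.deriv
    rw [hderiv, abs_lt]
    constructor
    · nlinarith [hkey2, hs0, hs_small]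
    · nlinarith [hkey2, hs0]
  · refine ⟨3/8, by norm_num, ?_⟩
    have heq : Set.EqOn
        (fun α : ℝ => ((3/2 + Real.sqrt (1/4 - 2/(3*α))) - (3/2 - Real.sqrt (1/4 - 2/(3*α)))) ^ 2 / (α - 8/3))
        (fun α : ℝ => α⁻¹) (Set.Ioi (8/3 : ℝ)) := by
      intro α hα
      obtain ⟨hα0, harg, hs2, hs0, hslt⟩ := basic_facts hα
      set s := Real.sqrt (1/4 - 2/(3*α)) with hs_def
      have hαne : α ≠ 0 := ne_of_gt hα0
      have hδne : α - 8/3 ≠ 0 := by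
        have : (8:ℝ)/3 < α := hα
        intro h; linarith [sub_eq_zero.mp h]
      show ((3/2 + s) - (3/2 - s))^2 / (α - 8/3) = α⁻¹
      rw [show ((3/2 + s) - (3/2 - s))^2 = 4 * s^2 by ring, hs2]
      rw [show (4:ℝ) * (1/4 - 2/(3*α)) = (α - 8/3)/α by field_simp; ring]
      rw [div_div, mul_comm, ← div_div, div_self hδne, one_div]
    have htend : Tendsto (fun α : ℝ => α⁻¹)
        (nhdsWithin (8/3) (Set.Ioi (8/3 : ℝ))) (nhds ((8/3 : ℝ)⁻¹)) :=
      ((continuousAt_inv₀ (by norm_num : (8/3 : ℝ) ≠ 0)).continuousWithinAt).tendsto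
    have h38 : ((8/3 : ℝ)⁻¹) = 3/8 := by norm_num
    rw [h38] at htend
    exact htend.congr'
      ((Filter.eventuallyEq_of_mem self_mem_nhdsWithin heq).symm)
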